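/- If H is a subgraph of G, then δ_e^s(H) ≤ δ_e^s(G) for every s ∈ ℕ≥1 ∪ {∞}. -/

import Mathlib

/-- A walk in a multigraph given by its endpoint function `ends`:
`IsWalk ends u w l` means `l` is the list of edges of a walk from `u` to `w`. -/
inductive IsWalk {V E : Type*} (ends : E → Sym2 V) : V → V → List E → Prop
  | nil (v : V) : IsWalk ends v v []
  | cons {u v w : V} {e : E} {l : List E} :
      ends e = s(u, v) → IsWalk ends v w l → IsWalk ends u w (e :: l)

/-- `EdgeSep ends s x S A` : the edge set `A` meets every walk of length at most `s`
from `x` to a vertex of `S`. -/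
def EdgeSep {V E : Type*} (ends : E → Sym2 V) (s : ℕ∞) (x : V) (S : Set V) (A : Set E) : Prop :=
  ∀ y ∈ S, ∀ l : List E, IsWalk ends x y l → (l.length : ℕ∞) ≤ s → ∃ e ∈ l, e ∈ A

/-- A `(k,s)`-edge-hide-out: every edge set separating a vertex `x ∈ R` from `R \ {x}`
(at distance `s`) has at least `k` edges. -/
def IsHideout {V E : Type*} (ends : E → Sym2 V) (s : ℕ∞) (k : ℕ) (R : Set V) : Prop :=
  ∀ x ∈ R, ∀ A : Set E, EdgeSep ends s x (R \ {x}) A → k ≤ A.ncard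

/-- `G` admits a layout of `s`-edge-degeneracy at most `k`. -/
def LayoutWidthLE {V E : Type*} (ends : E → Sym2 V) (s : ℕ∞) (k : ℕ) : Prop :=
  ∃ (n : ℕ) (L : Fin n ≃ V), ∀ i : Fin n,
    ∃ A : Set E, A.ncard ≤ k ∧ EdgeSep ends s (L i) {v | ∃ j, j < i ∧ L j = v} A

/-- The `s`-edge-degeneracy `δ_e^s(G)`. -/
noncomputable def edgeDeg {V E : Type*} (ends : E → Sym2 V) (s : ℕ∞) : ℕ :=
  sInf {k | LayoutWidthLE ends s k}

/-- The edge-degree of a vertex (parallel edges counted with multiplicity). -/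
noncomputable def degE {V E : Type*} (ends : E → Sym2 V) (v : V) : ℕ :=
  {e : E | v ∈ ends e}.ncard

/-- Mapping a walk along a subgraph embedding. -/
lemma isWalk_map {V' E' V E : Type*} (ends' : E' → Sym2 V') (ends : E → Sym2 V)
    (fV : V' ↪ V) (fE : E' ↪ E)
    (hsub : ∀ e : E', ends (fE e) = (ends' e).map fV)
    {u w : V'} {l : List E'} (h : IsWalk ends' u w l) :
    IsWalk ends (fV u) (fV w) (l.map fE) := by
  induction h with
  | nil v => exact IsWalk.nil (fV v)
  | cons he _ ih =>
      refine IsWalk.cons ?_ ih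
      rw [hsub, he, Sym2.map_pair_eq]

/-- There is always some bound: the total number of edges works. -/
lemma layoutWidthLE_card {V E : Type*} [Finite V] [Finite E] (ends : E → Sym2 V) (s : ℕ∞) :
    LayoutWidthLE ends s (Set.univ : Set E).ncard := by
  cases nonempty_fintype V
  refine ⟨Fintype.card V, (Fintype.equivFin V).symm, fun i => ⟨Set.univ, le_rfl, ?_⟩⟩
  rintro y ⟨j, hj, hLj⟩ l hl _
  cases hl with
  | nil v =>
      exfalso
      have : j = i := (Fintype.equivFin V).symm.injective hLj
      exact absurd (this ▸ hj) (lt_irrefl i)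
  | cons he _ => exact ⟨_, List.mem_cons_self, Set.mem_univ _⟩

theorem edgeDeg_mono_subgraph {V' E' V E : Type*} [Finite V'] [Finite E'] [Finite V] [Finite E]
    (ends' : E' → Sym2 V') (ends : E → Sym2 V)
    (hl' : ∀ e, ¬ (ends' e).IsDiag) (hl : ∀ e, ¬ (ends e).IsDiag)
    (fV : V' ↪ V) (fE : E' ↪ E)
    (hsub : ∀ e : E', ends (fE e) = (ends' e).map fV)
    (s : ℕ∞) (hs : 1 ≤ s) :
    edgeDeg ends' s ≤ edgeDeg ends s := by
  have hne : {k | LayoutWidthLE ends s k}.Nonempty := ⟨_, layoutWidthLE_card ends s⟩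
  have hG : LayoutWidthLE ends s (edgeDeg ends s) := Nat.sInf_mem hne
  obtain ⟨n, L, hL⟩ := hG
  -- pull the order of the layout back to V'
  cases nonempty_fintype V'
  set g : V' → Fin n := fun v => L.symm (fV v) with hg
  have hginj : Function.Injective g := fun a b h => fV.injective (L.symm.injective h)
  letI : LinearOrder V' := LinearOrder.lift' g hginj
  have hlt : ∀ a b : V', a < b ↔ g a < g b := by
    intro a b
    constructor
    · intro h
      rcases lt_iff_le_and_ne.mp h with ⟨hle, hne'⟩
      exact lt_of_le_of_ne hle (fun hgab => hne' (hginj hgab))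
    · intro h
      exact lt_iff_le_and_ne.mpr ⟨le_of_lt h, fun hab => absurd (hab ▸ h) (lt_irrefl _)⟩
  set L' : Fin (Fintype.card V') ≃o V' := monoEquivOfFin V' rfl with hL'
  refine Nat.sInf_le ?_
  refine ⟨Fintype.card V', L'.toEquiv, fun i => ?_⟩
  obtain ⟨A, hAcard, hAsep⟩ := hL (g (L' i))
  refine ⟨fE ⁻¹' A, ?_, ?_⟩
  · calc (fE ⁻¹' A).ncard = (fE '' (fE ⁻¹' A)).ncard :=
          (Set.ncard_image_of_injective _ fE.injective).symm
      _ ≤ A.ncard := Set.ncard_le_ncard (Set.image_preimage_subset _ _) A.toFinite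
      _ ≤ _ := hAcard
  · rintro y ⟨j, hj, hLj⟩ l hwalk hlen
    have hyi : y < L' i := by
      rw [← hLj]
      exact L'.lt_iff_lt.mpr hj
    have hmem : fV y ∈ {v | ∃ j0, j0 < g (L' i) ∧ L j0 = v} := by
      refine ⟨g y, (hlt y (L' i)).mp hyi, ?_⟩
      simp [hg]
    have hwalk' : IsWalk ends (fV (L' i)) (fV y) (l.map fE) :=
      isWalk_map ends' ends fV fE hsub hwalk
    have hLg : L (g (L' i)) = fV (L' i) := by simp [hg]
    rw [← hLg] at hwalk'
    obtain ⟨e, hel, heA⟩ := hAsep (fV y) hmem (l.map fE) hwalk' (by simpa using hlen)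
    obtain ⟨e₀, he₀l, rfl⟩ := List.mem_map.mp hel
    exact ⟨e₀, he₀l, heA⟩
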